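/- arXiv:1601.06453 — 2 statements merged into one kernel-verified Lean document; each statement's English description precedes it below -/
import Mathlib

section
/- Fix q ∈ [0,1) and for ε ∈ (0,1/2) let H̄(Y_ε) denote the entropy rate of the process obtained by passing the stationary binary Markov process with transition probabilities q₀₁ = q and q₁₀ = 1 through a binary symmetric channel with crossover probability α = 1/2 - ε. Then H̄(Y_ε) = 1 - 2·log₂e·((1-q)/(1+q))²·ε² + O(ε⁴) as ε → 0; that is, there exist C > 0 and ε₀ > 0 such that for all 0 < ε < ε₀, |H̄(Y_ε) - 1 + 2·log₂e·((1-q)/(1+q))²·ε²| ≤ C·ε⁴. -/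
open Real Filter MeasureTheory

/-- Binary entropy function (base-2 logarithm), with `binEnt 0 = binEnt 1 = 0`. -/
noncomputable def binEnt (p : ℝ) : ℝ :=
  -p * Real.logb 2 p - (1 - p) * Real.logb 2 (1 - p)

/-- Inverse of the binary entropy function, mapping `[0,1]` onto `[0,1/2]`. -/
noncomputable def binEntInv (y : ℝ) : ℝ :=
  sInf {p : ℝ | p ∈ Set.Icc (0:ℝ) (1/2) ∧ y ≤ binEnt p}

/-- Binary convolution `a*b := a(1-b) + b(1-a)`. -/
def bConv (a b : ℝ) : ℝ := a * (1 - b) + b * (1 - a)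

/-- Shannon entropy (in bits) of a distribution on a finite type. -/
noncomputable def entropyDist {β : Type*} [Fintype β] (p : β → ℝ) : ℝ :=
  ∑ b, -(p b * Real.logb 2 (p b))

/-- Probability of the path `x` under the stationary symmetric binary Markov process with
transition probability `q`: the first coordinate is uniform (`Bernoulli(1/2)`) and each
subsequent coordinate flips the previous one with probability `q`. -/
noncomputable def symPathProb (q : ℝ) (n : ℕ) (x : Fin n → Bool) : ℝ :=
  ∏ i : Fin n,
    if (i : ℕ) = 0 then (1/2 : ℝ)
    else if x ⟨(i : ℕ) - 1, Nat.lt_of_le_of_lt (Nat.sub_le _ _) i.isLt⟩ = x i then 1 - q else q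

/-- Output distribution of a memoryless binary symmetric channel with crossover probability `a`
applied to an input with distribution `p` (each coordinate flipped independently w.p. `a`). -/
noncomputable def bscOutput {n : ℕ} (a : ℝ) (p : (Fin n → Bool) → ℝ) : (Fin n → Bool) → ℝ :=
  fun y => ∑ x : Fin n → Bool, p x * ∏ i, (if y i = x i then 1 - a else a)

/-- Distribution of the projection onto the coordinates in `s` of a vector with distribution `p`. -/
noncomputable def projDist {n : ℕ} (p : (Fin n → Bool) → ℝ) (s : Finset (Fin n)) :
    ({ i // i ∈ s } → Bool) → ℝ :=
  fun y => ∑ x : Fin n → Bool, if (∀ i : { i // i ∈ s }, x i.val = y i) then p x else 0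

/-- `H(X_S | S) = ∑_{s ⊆ [n]} P(S = s) H(X_s)`, where the random subset `S` contains each
element of `[n]` independently with probability `lam`. -/
noncomputable def condEntProj {n : ℕ} (lam : ℝ) (p : (Fin n → Bool) → ℝ) : ℝ :=
  ∑ s : Finset (Fin n), lam ^ s.card * (1 - lam) ^ (n - s.card) * entropyDist (projDist p s)

/-- Transition kernel of a binary Markov chain: `P(b | a)` with off-diagonal entries
`q01 = P(1|0)` and `q10 = P(0|1)`. -/
def markovTrans (q01 q10 : ℝ) (a b : Bool) : ℝ :=
  if a then (if b then 1 - q10 else q10) else (if b then q01 else 1 - q01)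

/-- Probability of the path `x` under the binary Markov chain with initial distribution
`(p0, p1)` and transition probabilities `q01, q10`. -/
noncomputable def markovPathProb (p0 p1 q01 q10 : ℝ) (n : ℕ) (x : Fin n → Bool) : ℝ :=
  ∏ i : Fin n,
    if (i : ℕ) = 0 then (if x i then p1 else p0)
    else markovTrans q01 q10 (x ⟨(i : ℕ) - 1, Nat.lt_of_le_of_lt (Nat.sub_le _ _) i.isLt⟩) (x i)

lemma log2pos : (0:ℝ) < Real.log 2 := Real.log_pos (by norm_num)

lemma Fbounds {u : ℝ} (hu : |u| ≤ 1/10) :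
    u^2 ≤ (1+u)*Real.log (1+u) + (1-u)*Real.log (1-u)
    ∧ (1+u)*Real.log (1+u) + (1-u)*Real.log (1-u) ≤ u^2 + u^4 := by
  have hu1 : |u| < 1 := lt_of_le_of_lt hu (by norm_num)
  have hu1' : |(-u)| < 1 := by rwa [abs_neg]
  have h1 := Real.abs_log_sub_add_sum_range_le hu1 5
  have h2 := Real.abs_log_sub_add_sum_range_le hu1' 5
  simp only [Finset.sum_range_succ, Finset.sum_range_zero] at h1 h2
  rw [abs_neg] at h2
  have habs : |u|^6 = u^6 := by rw [← abs_pow, abs_of_nonneg (by positivity)]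
  have herr : |u|^6 / (1 - |u|) ≤ (10/9) * u^6 := by
    rw [div_le_iff₀ (by linarith), habs]
    nlinarith [pow_nonneg (abs_nonneg u) 6]
  set E2 : ℝ := Real.log (1-u) - (-u - u^2/2 - u^3/3 - u^4/4 - u^5/5) with hE2def
  set E1 : ℝ := Real.log (1+u) - (u - u^2/2 + u^3/3 - u^4/4 + u^5/5) with hE1def
  have hE2 : |E2| ≤ (10/9) * u^6 := by
    refine le_trans (le_of_eq ?_) (le_trans h1 herr)
    rw [hE2def]; congr 1; push_cast; ring
  have hE1 : |E1| ≤ (10/9) * u^6 := by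
    refine le_trans (le_of_eq ?_) (le_trans h2 herr)
    rw [hE1def]
    have h : (1:ℝ) - -u = 1 + u := by ring
    rw [h]; congr 1; push_cast; ring
  have hb1 : |(1+u)*E1| ≤ (11/10) * ((10/9) * u^6) := by
    rw [abs_mul]
    apply mul_le_mul (by rw [abs_le]; constructor <;> [linarith [abs_le.mp hu] ; linarith [abs_le.mp hu]]) hE1 (abs_nonneg _) (by norm_num)
  have hb2 : |(1-u)*E2| ≤ (11/10) * ((10/9) * u^6) := by
    rw [abs_mul]
    apply mul_le_mul (by rw [abs_le]; constructor <;> [linarith [abs_le.mp hu] ; linarith [abs_le.mp hu]]) hE2 (abs_nonneg _) (by norm_num)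
  have key : (1+u)*Real.log (1+u) + (1-u)*Real.log (1-u)
      = u^2 + u^4/6 + (2/5)*u^6 + ((1+u)*E1 + (1-u)*E2) := by
    rw [hE1def, hE2def]; ring
  have h4 : (0:ℝ) ≤ u^4 := by positivity
  have h64 : u^6 ≤ (1/100)*u^4 := by
    have : u^2 ≤ 1/100 := by nlinarith [sq_abs u, abs_nonneg u]
    nlinarith
  have hc1 := abs_le.mp hb1
  have hc2 := abs_le.mp hb2
  have h6 : (0:ℝ) ≤ u^6 := by positivity
  constructor <;> [skip; skip] <;> rw [key] <;> linarith

lemma binEnt_eq {t : ℝ} (ht : |t| < 1/2) :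
    binEnt (1/2 - t)
      = 1 - ((1+2*t)*Real.log (1+2*t) + (1-2*t)*Real.log (1-2*t))/(2*Real.log 2) := by
  have h1 : (0:ℝ) < 1 - 2*t := by rcases abs_lt.mp ht with ⟨a,b⟩; linarith
  have h2 : (0:ℝ) < 1 + 2*t := by rcases abs_lt.mp ht with ⟨a,b⟩; linarith
  have e1 : (1:ℝ)/2 - t = (1-2*t)/2 := by ring
  have e2 : (1:ℝ) - (1/2 - t) = (1+2*t)/2 := by ring
  rw [binEnt, e2, e1]
  rw [Real.logb, Real.logb, Real.log_div (by linarith) (by norm_num),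
      Real.log_div (by linarith) (by norm_num)]
  field_simp
  ring

lemma binEnt_le {t : ℝ} (ht : |t| ≤ 1/20) :
    binEnt (1/2 - t) ≤ 1 - (2/Real.log 2)*t^2 := by
  have hu : |2*t| ≤ 1/10 := by
    rcases abs_le.mp ht with ⟨a,b⟩; rw [abs_le]; constructor <;> linarith
  have hF := (Fbounds hu).1
  rw [binEnt_eq (lt_of_le_of_lt ht (by norm_num))]
  have h2D : (0:ℝ) < 2*Real.log 2 := by linarith [log2pos]
  have h : (2*t)^2/(2*Real.log 2)
      ≤ ((1+2*t)*Real.log (1+2*t) + (1-2*t)*Real.log (1-2*t))/(2*Real.log 2) := by gcongr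
  have he : (2*t)^2/(2*Real.log 2) = (2/Real.log 2)*t^2 := by
    field_simp
  linarith [he ▸ h]

lemma binEnt_ge {t : ℝ} (ht : |t| ≤ 1/20) :
    1 - (2/Real.log 2)*t^2 - 12*t^4 ≤ binEnt (1/2 - t) := by
  have hu : |2*t| ≤ 1/10 := by
    rcases abs_le.mp ht with ⟨a,b⟩; rw [abs_le]; constructor <;> linarith
  have hF := (Fbounds hu).2
  rw [binEnt_eq (lt_of_le_of_lt ht (by norm_num))]
  have h2D : (0:ℝ) < 2*Real.log 2 := by linarith [log2pos]
  have h : ((1+2*t)*Real.log (1+2*t) + (1-2*t)*Real.log (1-2*t))/(2*Real.log 2)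
      ≤ ((2*t)^2 + (2*t)^4)/(2*Real.log 2) := by gcongr
  have he : ((2*t)^2 + (2*t)^4)/(2*Real.log 2) = (2/Real.log 2)*t^2 + (8/Real.log 2)*t^4 := by
    field_simp; ring
  have h4 : (0:ℝ) ≤ t^4 := by positivity
  have hlog : (8:ℝ)/Real.log 2 ≤ 12 := by
    rw [div_le_iff₀ log2pos]
    linarith [Real.log_two_gt_d9]
  have hb : (8/Real.log 2)*t^4 ≤ 12*t^4 := mul_le_mul_of_nonneg_right hlog h4
  linarith [he ▸ h]


noncomputable def chB (e : ℝ) (y x : Bool) : ℝ := if y = x then 1/2 + e else 1/2 - e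

noncomputable def fl (q e : ℝ) : (n : ℕ) → (Fin (n+1) → Bool) → Bool → ℝ
  | 0, y, x => (if x then q/(1+q) else 1/(1+q)) * chB e (y 0) x
  | (n+1), y, x' => (∑ x : Bool, fl q e n (Fin.init y) x * markovTrans q 1 x x')
      * chB e (y (Fin.last (n+1))) x'

def snocEquiv (n : ℕ) : (Fin n → Bool) × Bool ≃ (Fin (n+1) → Bool) where
  toFun p := Fin.snoc p.1 p.2
  invFun x := (Fin.init x, x (Fin.last n))
  left_inv p := by simp
  right_inv x := by simp [Fin.snoc_init_self]

lemma sum_snoc {M : Type*} [AddCommMonoid M] {n : ℕ} (f : (Fin (n+1) → Bool) → M) :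
    ∑ x : Fin (n+1) → Bool, f x = ∑ x₀ : Fin n → Bool, ∑ b : Bool, f (Fin.snoc x₀ b) := by
  rw [← (Fintype.sum_equiv (snocEquiv n) (fun p => f (snocEquiv n p)) f (fun p => rfl))]
  exact Fintype.sum_prod_type _

lemma markov_snoc (p0 p1 q01 q10 : ℝ) (n : ℕ) (x : Fin (n+1) → Bool) (b : Bool) :
    markovPathProb p0 p1 q01 q10 (n+2) (Fin.snoc x b)
      = markovPathProb p0 p1 q01 q10 (n+1) x * markovTrans q01 q10 (x (Fin.last n)) b := by
  unfold markovPathProb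
  rw [Fin.prod_univ_castSucc]
  congr 1
  · apply Finset.prod_congr rfl
    intro i _
    have hc : ((Fin.castSucc i : Fin (n+2)) : ℕ) = (i:ℕ) := rfl
    by_cases h0 : (i:ℕ) = 0
    · simp only [hc, h0, if_pos, Fin.snoc_castSucc]
    · simp only [hc, h0, if_neg, Fin.snoc_castSucc]
      have hlt : (i:ℕ) - 1 < n + 1 := Nat.lt_of_le_of_lt (Nat.sub_le _ _) i.isLt
      have he : (⟨(i:ℕ)-1, Nat.lt_of_le_of_lt (Nat.sub_le _ _) (Fin.castSucc i).isLt⟩ : Fin (n+2))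
          = Fin.castSucc ⟨(i:ℕ)-1, hlt⟩ := by
        ext; simp
      rw [he, Fin.snoc_castSucc]
  · have hl : ((Fin.last (n+1) : Fin (n+2)) : ℕ) = n+1 := rfl
    rw [if_neg (by omega)]
    have he : (⟨(Fin.last (n+1) : ℕ)-1, Nat.lt_of_le_of_lt (Nat.sub_le _ _) (Fin.last (n+1)).isLt⟩ : Fin (n+2))
        = Fin.castSucc (Fin.last n) := by
      ext; simp
    rw [he, Fin.snoc_castSucc, Fin.snoc_last]

lemma chprod_snoc {n : ℕ} (g : Bool → Bool → ℝ) (y x : Fin (n+1) → Bool) (c b : Bool) :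
    ∏ i : Fin (n+2), g ((Fin.snoc y c : Fin (n+2) → Bool) i) ((Fin.snoc x b : Fin (n+2) → Bool) i)
      = (∏ i : Fin (n+1), g (y i) (x i)) * g c b := by
  rw [Fin.prod_univ_castSucc]
  congr 1
  · apply Finset.prod_congr rfl
    intro i _
    rw [Fin.snoc_castSucc, Fin.snoc_castSucc]
  · rw [Fin.snoc_last, Fin.snoc_last]

lemma bridge (q e : ℝ) : ∀ (n : ℕ) (y : Fin (n+1) → Bool) (x' : Bool),
    fl q e n y x' = ∑ x : Fin (n+1) → Bool,
      (if x (Fin.last n) = x'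
        then markovPathProb (1/(1+q)) (q/(1+q)) q 1 (n+1) x * ∏ i, chB e (y i) (x i) else 0) := by
  intro n
  induction n with
  | zero =>
    intro y x'
    rw [← Equiv.sum_comp (Equiv.funUnique (Fin 1) Bool).symm]
    rw [Fintype.sum_bool]
    cases x' <;>
      simp [fl, markovPathProb, chB, Fin.prod_univ_one, Function.const, Equiv.funUnique,
        Fin.last]
  | succ n IH =>
    intro y x'
    rw [sum_snoc]
    have hy : Fin.snoc (Fin.init y) (y (Fin.last (n+1))) = y := Fin.snoc_init_self y
    calc fl q e (n+1) y x'
        = (∑ x'' : Bool, fl q e n (Fin.init y) x'' * markovTrans q 1 x'' x')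
            * chB e (y (Fin.last (n+1))) x' := rfl
      _ = (∑ x'' : Bool, (∑ x₀ : Fin n.succ → Bool, if x₀ (Fin.last n) = x''
              then markovPathProb (1/(1+q)) (q/(1+q)) q 1 (n+1) x₀ * ∏ i, chB e (Fin.init y i) (x₀ i)
              else 0) * markovTrans q 1 x'' x') * chB e (y (Fin.last (n+1))) x' := by
          simp only [IH]
      _ = ∑ x₀ : Fin n.succ → Bool, ∑ b : Bool, (if b = x'
              then markovPathProb (1/(1+q)) (q/(1+q)) q 1 (n+2) (Fin.snoc x₀ b)
                * ((∏ i, chB e (Fin.init y i) (x₀ i)) * chB e (y (Fin.last (n+1))) b)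
              else 0) := by
          simp only [Finset.sum_mul, markov_snoc]
          rw [Finset.sum_comm]
          apply Finset.sum_congr rfl
          intro x₀ _
          rw [Fintype.sum_bool, Fintype.sum_bool]
          cases hx : x₀ (Fin.last n) <;> cases x' <;>
            simp [hx, markovTrans] <;> ring
      _ = ∑ x₀ : Fin n.succ → Bool, ∑ b : Bool, (if (Fin.snoc x₀ b : Fin (n+2) → Bool) (Fin.last (n+1)) = x'
              then markovPathProb (1/(1+q)) (q/(1+q)) q 1 (n+2) (Fin.snoc x₀ b)
                * ∏ i, chB e (y i) ((Fin.snoc x₀ b : Fin (n+2) → Bool) i)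
              else 0) := by
          apply Finset.sum_congr rfl; intro x₀ _
          apply Finset.sum_congr rfl; intro b _
          rw [Fin.snoc_last]
          congr 1
          rw [← hy, chprod_snoc, hy]


lemma Pn_eq (q e : ℝ) (n : ℕ) (y : Fin (n+1) → Bool) :
    bscOutput (1/2 - e) (markovPathProb (1/(1+q)) (q/(1+q)) q 1 (n+1)) y
      = fl q e n y true + fl q e n y false := by
  rw [bridge, bridge, ← Finset.sum_add_distrib]
  unfold bscOutput
  apply Finset.sum_congr rfl
  intro x _
  have hch : ∀ i, (if y i = x i then 1 - (1/2 - e) else (1/2 - e)) = chB e (y i) (x i) := by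
    intro i; unfold chB; split <;> ring
  rw [Finset.prod_congr rfl (fun i _ => hch i)]
  cases h : x (Fin.last n) <;> simp [h]

section FL
variable {q e : ℝ}

lemma fl_snoc_true (n : ℕ) (y : Fin (n+1) → Bool) (b : Bool) :
    fl q e (n+1) (Fin.snoc y b) true = (fl q e n y false * q) * chB e b true := by
  show (∑ x : Bool, fl q e n (Fin.init (Fin.snoc y b : Fin (n+2) → Bool)) x * markovTrans q 1 x true)
      * chB e ((Fin.snoc y b : Fin (n+2) → Bool) (Fin.last (n+1))) true = _
  rw [Fin.init_snoc, Fin.snoc_last, Fintype.sum_bool]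
  simp [markovTrans]

lemma fl_snoc_false (n : ℕ) (y : Fin (n+1) → Bool) (b : Bool) :
    fl q e (n+1) (Fin.snoc y b) false
      = (fl q e n y true + fl q e n y false * (1-q)) * chB e b false := by
  show (∑ x : Bool, fl q e n (Fin.init (Fin.snoc y b : Fin (n+2) → Bool)) x * markovTrans q 1 x false)
      * chB e ((Fin.snoc y b : Fin (n+2) → Bool) (Fin.last (n+1))) false = _
  rw [Fin.init_snoc, Fin.snoc_last, Fintype.sum_bool]
  simp [markovTrans]

variable (hq0 : 0 ≤ q) (hq1 : q < 1) (he0 : 0 < e) (he : e ≤ 1/100)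
include hq0 hq1 he0 he

lemma chB_pos : ∀ a b, 0 < chB e a b := by
  intro a b; unfold chB; split <;> linarith

lemma chB_sum (x : Bool) : chB e true x + chB e false x = 1 := by
  cases x <;> simp [chB] <;> ring

lemma fl_nonneg : ∀ (n : ℕ) (y : Fin (n+1) → Bool) (x' : Bool), 0 ≤ fl q e n y x' := by
  intro n
  induction n with
  | zero =>
    intro y x'
    have h1q : (0:ℝ) < 1 + q := by linarith
    apply mul_nonneg _ (le_of_lt (chB_pos hq0 hq1 he0 he _ _))
    split <;> positivity
  | succ n IH =>
    intro y x'
    apply mul_nonneg _ (le_of_lt (chB_pos hq0 hq1 he0 he _ _))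
    apply Finset.sum_nonneg
    intro x _
    apply mul_nonneg (IH _ _)
    cases x <;> cases x' <;> simp [markovTrans] <;> linarith

lemma fl_false_pos : ∀ (n : ℕ) (y : Fin (n+1) → Bool), 0 < fl q e n y false := by
  intro n
  induction n with
  | zero =>
    intro y
    have h1q : (0:ℝ) < 1 + q := by linarith
    apply mul_pos _ (chB_pos hq0 hq1 he0 he _ _)
    simp; positivity
  | succ n IH =>
    intro y
    show 0 < (∑ x : Bool, fl q e n (Fin.init y) x * markovTrans q 1 x false)
      * chB e (y (Fin.last (n+1))) false
    apply mul_pos _ (chB_pos hq0 hq1 he0 he _ _)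
    rw [Fintype.sum_bool]
    have h1 := fl_nonneg hq0 hq1 he0 he n (Fin.init y) true
    have h2 := IH (Fin.init y)
    have : markovTrans q 1 true false = 1 := by simp [markovTrans]
    rw [this]
    have : markovTrans q 1 false false = 1 - q := by simp [markovTrans]
    rw [this]
    nlinarith

lemma S_pos (n : ℕ) (y : Fin (n+1) → Bool) : 0 < fl q e n y true + fl q e n y false := by
  have := fl_nonneg hq0 hq1 he0 he n y true
  have := fl_false_pos hq0 hq1 he0 he n y
  linarith

lemma flStat : ∀ n : ℕ, (∑ y : Fin (n+1) → Bool, fl q e n y true) = q/(1+q)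
    ∧ (∑ y : Fin (n+1) → Bool, fl q e n y false) = 1/(1+q) := by
  intro n
  induction n with
  | zero =>
    constructor <;>
    · rw [← Equiv.sum_comp (Equiv.funUnique (Fin 1) Bool).symm, Fintype.sum_bool]
      simp [fl, chB, Equiv.funUnique, Function.const, Fin.last]
      ring
  | succ n IH =>
    have hsum : ∀ b0 : Bool, (chB e true b0 + chB e false b0) = 1 := chB_sum hq0 hq1 he0 he
    constructor
    · rw [sum_snoc]
      simp only [fl_snoc_true]
      rw [Finset.sum_comm]
      rw [Fintype.sum_bool]
      rw [← Finset.sum_add_distrib]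
      have : ∀ y : Fin (n+1) → Bool,
          fl q e n y false * q * chB e true true + fl q e n y false * q * chB e false true
            = (fl q e n y false) * q := by
        intro y
        have h := chB_sum (q := q) hq0 hq1 he0 he true
        rw [← mul_add, h, mul_one]
      rw [Finset.sum_congr rfl (fun y _ => this y), ← Finset.sum_mul, IH.2]
      field_simp
    · rw [sum_snoc]
      simp only [fl_snoc_false]
      rw [Finset.sum_comm, Fintype.sum_bool, ← Finset.sum_add_distrib]
      have : ∀ y : Fin (n+1) → Bool,
          (fl q e n y true + fl q e n y false * (1-q)) * chB e true false
            + (fl q e n y true + fl q e n y false * (1-q)) * chB e false false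
            = fl q e n y true + fl q e n y false * (1-q) := by
        intro y
        have h := chB_sum (q := q) hq0 hq1 he0 he false
        rw [← mul_add, h, mul_one]
      rw [Finset.sum_congr rfl (fun y _ => this y)]
      rw [Finset.sum_add_distrib, IH.1, ← Finset.sum_mul, IH.2]
      have h1q : (1:ℝ)+q ≠ 0 := by intro h; linarith
      field_simp
      ring

end FL



lemma update_bound {A B c1 c0 e : ℝ} (hA : 0 ≤ A) (hB : 0 < B)
    (he0 : 0 < e) (he : e ≤ 1/100)
    (hc : (c1 = 1/2 + e ∧ c0 = 1/2 - e) ∨ (c1 = 1/2 - e ∧ c0 = 1/2 + e)) :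
    |A*c1/(A*c1 + B*c0) - A/(A+B)| ≤ 2*e := by
  have hc1 : 0 < c1 := by rcases hc with ⟨h1,h2⟩|⟨h1,h2⟩ <;> rw [h1] <;> linarith
  have hc0 : 0 < c0 := by rcases hc with ⟨h1,h2⟩|⟨h1,h2⟩ <;> rw [h2] <;> linarith
  have hAB : 0 < A + B := by linarith
  have hD : 0 < A*c1 + B*c0 := by positivity
  have heq : A*c1/(A*c1 + B*c0) - A/(A+B) = A*B*(c1-c0)/((A*c1+B*c0)*(A+B)) := by
    field_simp
    ring
  rw [heq, abs_div, abs_of_pos (mul_pos hD hAB), abs_mul,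
    abs_of_nonneg (mul_nonneg hA hB.le)]
  have hdle : (A+B)*(1/2 - e) ≤ A*c1 + B*c0 := by
    rcases hc with ⟨h1,h2⟩|⟨h1,h2⟩ <;> rw [h1,h2] <;> nlinarith
  have hcc : |c1 - c0| = 2*e := by
    rcases hc with ⟨h1,h2⟩|⟨h1,h2⟩ <;> rw [h1,h2] <;>
      [rw [abs_of_pos (by linarith)]; rw [abs_of_neg (by linarith)]] <;> ring
  rw [hcc, div_le_iff₀ (mul_pos hD hAB)]
  have h1 : A*B ≤ (A*c1+B*c0)*(A+B) := by
    nlinarith [sq_nonneg (A-B), mul_le_mul_of_nonneg_left hdle hAB.le,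
      mul_nonneg (by linarith : (0:ℝ) ≤ 1/4 - e) (sq_nonneg (A+B))]
  nlinarith [mul_le_mul_of_nonneg_left h1 (by linarith : (0:ℝ) ≤ 2*e)]


section
variable {q e : ℝ} (hq0 : 0 ≤ q) (hq1 : q < 1) (he0 : 0 < e) (he : e ≤ 1/100)
include hq0 hq1 he0 he


omit hq0 hq1 he0 he in
lemma chBcases (b : Bool) :
    (chB e b true = 1/2 + e ∧ chB e b false = 1/2 - e)
    ∨ (chB e b true = 1/2 - e ∧ chB e b false = 1/2 + e) := by
  cases b <;> simp [chB]

lemma rho_bound : ∀ (n : ℕ) (y : Fin (n+1) → Bool),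
    |fl q e n y true / (fl q e n y true + fl q e n y false) - q/(1+q)| ≤ 2*e/(1-q) := by
  intro n
  have h1q : (0:ℝ) < 1+q := by linarith
  have h1q' : (0:ℝ) < 1-q := by linarith
  have h2e : 2*e ≤ 2*e/(1-q) := by
    rw [le_div_iff₀ h1q']
    nlinarith
  induction n with
  | zero =>
    intro y
    have key := update_bound (A := q/(1+q)) (B := 1/(1+q))
      (by positivity) (by positivity) he0 he (chBcases (y 0))
    have hsum1 : q/(1+q) + 1/(1+q) = 1 := by
      rw [← add_div, show q+1 = 1+q from by ring, div_self h1q.ne']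
    rw [hsum1, div_one] at key
    have hfl : ∀ x' : Bool, fl q e 0 y x' = (if x' then q/(1+q) else 1/(1+q)) * chB e (y 0) x' :=
      fun _ => rfl
    rw [hfl true, hfl false]
    simp only [if_true, if_false]
    exact le_trans key h2e
  | succ n IH =>
    intro y
    rw [← Fin.snoc_init_self y]
    set y0 := Fin.init y with hy0
    set b := y (Fin.last (n+1)) with hb
    rw [fl_snoc_true, fl_snoc_false]
    set u := fl q e n y0 true with hu
    set v := fl q e n y0 false with hv
    have hu0 : 0 ≤ u := fl_nonneg hq0 hq1 he0 he n y0 true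
    have hv0 : 0 < v := fl_false_pos hq0 hq1 he0 he n y0
    have hB : 0 < u + v*(1-q) := by nlinarith
    have huv : 0 < u + v := by linarith [mul_pos hv0 h1q']
    have key := update_bound (A := v*q) (B := u + v*(1-q))
      (mul_nonneg hv0.le hq0) hB he0 he (chBcases b)
    have hden : v*q + (u + v*(1-q)) = u + v := by ring
    rw [hden] at key
    have hrpi : v*q/(u+v) - q/(1+q) = -(q*(u/(u+v) - q/(1+q))) := by
      field_simp
      ring
    have hIH := IH y0
    calc |v*q*chB e b true / (v*q*chB e b true + (u + v*(1-q))*chB e b false) - q/(1+q)|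
        ≤ |v*q*chB e b true / (v*q*chB e b true + (u + v*(1-q))*chB e b false) - v*q/(u+v)|
          + |v*q/(u+v) - q/(1+q)| := abs_sub_le _ _ _
      _ ≤ 2*e + q*(2*e/(1-q)) := by
          apply add_le_add key
          rw [hrpi, abs_neg, abs_mul, abs_of_nonneg hq0]
          exact mul_le_mul_of_nonneg_left hIH hq0
      _ = 2*e/(1-q) := by field_simp; ring
end


noncomputable def SD (q e : ℝ) (n : ℕ) (y : Fin (n+1) → Bool) : ℝ :=
  fl q e n y true + fl q e n y false

noncomputable def wg (q e : ℝ) (n : ℕ) (y : Fin (n+1) → Bool) : ℝ :=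
  1 - 2*q*(fl q e n y false)/(SD q e n y)

section ENT
variable {q e : ℝ} (hq0 : 0 ≤ q) (hq1 : q < 1) (he0 : 0 < e) (he : e ≤ 1/100)
include hq0 hq1 he0 he

lemma SD_pos (n : ℕ) (y : Fin (n+1) → Bool) : 0 < SD q e n y :=
  S_pos hq0 hq1 he0 he n y

lemma SD_sum1 (n : ℕ) : ∑ y : Fin (n+1) → Bool, SD q e n y = 1 := by
  unfold SD
  rw [Finset.sum_add_distrib, (flStat hq0 hq1 he0 he n).1, (flStat hq0 hq1 he0 he n).2]
  have h1q : (1:ℝ)+q ≠ 0 := by intro h; linarith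
  rw [← add_div, show q+1 = 1+q from by ring, div_self h1q]

lemma SD_snoc_true (n : ℕ) (y : Fin (n+1) → Bool) :
    SD q e (n+1) (Fin.snoc y true) = SD q e n y * (1/2 - e * wg q e n y) := by
  have hS := SD_pos hq0 hq1 he0 he n y
  unfold SD wg
  rw [fl_snoc_true, fl_snoc_false]
  simp only [chB, if_pos rfl, if_true, if_neg (by simp : (true : Bool) ≠ false)]
  unfold SD at hS ⊢
  field_simp
  ring

lemma SD_snoc_false (n : ℕ) (y : Fin (n+1) → Bool) :
    SD q e (n+1) (Fin.snoc y false) = SD q e n y * (1/2 + e * wg q e n y) := by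
  have hS := SD_pos hq0 hq1 he0 he n y
  unfold SD wg
  rw [fl_snoc_true, fl_snoc_false]
  simp only [chB, if_pos rfl, if_true, if_neg (by simp : (false : Bool) ≠ true)]
  unfold SD at hS ⊢
  field_simp
  ring

lemma wg_abs (n : ℕ) (y : Fin (n+1) → Bool) : |wg q e n y| ≤ 1 := by
  have hS := SD_pos hq0 hq1 he0 he n y
  have hu := fl_nonneg hq0 hq1 he0 he n y true
  have hv := (fl_false_pos hq0 hq1 he0 he n y).le
  have hqv : q * fl q e n y false ≤ SD q e n y := by
    unfold SD; nlinarith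
  unfold wg
  rw [abs_le]
  constructor
  · have h2 : 2*q*(fl q e n y false)/(SD q e n y) ≤ 2 := by
      rw [div_le_iff₀ hS]; nlinarith
    linarith
  · have h0 : 0 ≤ 2*q*(fl q e n y false)/(SD q e n y) := by positivity
    linarith

lemma wg_m (n : ℕ) (y : Fin (n+1) → Bool) :
    |wg q e n y - (1-q)/(1+q)| ≤ 4*e/(1-q) := by
  have hS := SD_pos hq0 hq1 he0 he n y
  have h1q : (0:ℝ) < 1+q := by linarith
  have hrho := rho_bound hq0 hq1 he0 he n y
  have hid : wg q e n y - (1-q)/(1+q)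
      = 2*q*(fl q e n y true / (fl q e n y true + fl q e n y false) - q/(1+q)) := by
    unfold wg SD
    unfold SD at hS
    field_simp
    ring
  rw [hid, abs_mul, abs_of_nonneg (by linarith : (0:ℝ) ≤ 2*q)]
  calc 2*q * |fl q e n y true / (fl q e n y true + fl q e n y false) - q/(1+q)|
      ≤ 2*1 * (2*e/(1-q)) := by
        apply mul_le_mul (by linarith) hrho (abs_nonneg _) (by linarith)
    _ = 4*e/(1-q) := by ring

lemma sumSw (n : ℕ) :
    ∑ y : Fin (n+1) → Bool, SD q e n y * wg q e n y = (1-q)/(1+q) := by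
  have hid : ∀ y : Fin (n+1) → Bool,
      SD q e n y * wg q e n y = SD q e n y - 2*q*(fl q e n y false) := by
    intro y
    have hS := SD_pos hq0 hq1 he0 he n y
    unfold wg
    field_simp
  rw [Finset.sum_congr rfl (fun y _ => hid y), Finset.sum_sub_distrib,
    SD_sum1 hq0 hq1 he0 he n, ← Finset.mul_sum, (flStat hq0 hq1 he0 he n).2]
  have h1q : (1:ℝ)+q ≠ 0 := by intro h; linarith
  field_simp
  ring

end ENT

lemma ent_pair' {s c : ℝ} (hs : 0 < s) (hc0 : 0 < c) (hc1 : c < 1) :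
    -(s*c*Real.logb 2 (s*c)) + -(s*(1-c)*Real.logb 2 (s*(1-c)))
      = -(s*Real.logb 2 s) + s*binEnt c := by
  unfold binEnt
  rw [Real.logb_mul hs.ne' hc0.ne', Real.logb_mul hs.ne' (by linarith : (1:ℝ)-c ≠ 0)]
  ring

section ENT2
variable {q e : ℝ} (hq0 : 0 ≤ q) (hq1 : q < 1) (he0 : 0 < e) (he : e ≤ 1/100)
include hq0 hq1 he0 he

lemma ent_step (n : ℕ) :
    entropyDist (SD q e (n+1)) = entropyDist (SD q e n)
      + ∑ y : Fin (n+1) → Bool, SD q e n y * binEnt (1/2 - e * wg q e n y) := by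
  unfold entropyDist
  rw [sum_snoc]
  have hper : ∀ y : Fin (n+1) → Bool,
      (∑ b : Bool, -(SD q e (n+1) (Fin.snoc y b) * Real.logb 2 (SD q e (n+1) (Fin.snoc y b))))
        = -(SD q e n y * Real.logb 2 (SD q e n y))
          + SD q e n y * binEnt (1/2 - e * wg q e n y) := by
    intro y
    rw [Fintype.sum_bool, SD_snoc_true hq0 hq1 he0 he n y, SD_snoc_false hq0 hq1 he0 he n y]
    have hS := SD_pos hq0 hq1 he0 he n y
    have hw := wg_abs hq0 hq1 he0 he n y
    have hew : |e * wg q e n y| ≤ e := by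
      rw [abs_mul, abs_of_pos he0]
      nlinarith [abs_nonneg (wg q e n y)]
    have hew' := abs_le.mp hew
    have hc0 : 0 < 1/2 - e * wg q e n y := by linarith [hew'.1, hew'.2]
    have hc1 : 1/2 - e * wg q e n y < 1 := by linarith [hew'.1, hew'.2]
    have h12 : SD q e n y * (1/2 + e * wg q e n y)
        = SD q e n y * (1 - (1/2 - e * wg q e n y)) := by ring
    rw [h12, ent_pair' hS hc0 hc1]
  rw [Finset.sum_congr rfl (fun y _ => hper y), Finset.sum_add_distrib]

lemma ent_base :
    entropyDist (SD q e 0) = binEnt (1/2 - e * ((1-q)/(1+q))) := by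
  have h1q : (0:ℝ) < 1+q := by linarith
  unfold entropyDist
  rw [← Equiv.sum_comp (Equiv.funUnique (Fin 1) Bool).symm, Fintype.sum_bool]
  have ht : SD q e 0 ((Equiv.funUnique (Fin 1) Bool).symm true) = 1/2 - e * ((1-q)/(1+q)) := by
    show (if (true:Bool) then q/(1+q) else 1/(1+q)) * chB e true true
        + (if (false:Bool) then q/(1+q) else 1/(1+q)) * chB e true false = _
    norm_num [chB]
    field_simp
    ring
  have hf : SD q e 0 ((Equiv.funUnique (Fin 1) Bool).symm false) = 1/2 + e * ((1-q)/(1+q)) := by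
    show (if (true:Bool) then q/(1+q) else 1/(1+q)) * chB e false true
        + (if (false:Bool) then q/(1+q) else 1/(1+q)) * chB e false false = _
    norm_num [chB]
    field_simp
    ring
  rw [ht, hf]
  unfold binEnt
  have : (1:ℝ) - (1/2 - e * ((1-q)/(1+q))) = 1/2 + e * ((1-q)/(1+q)) := by ring
  rw [this]
  ring

lemma delta_bounds (n : ℕ) :
    1 - (2/Real.log 2)*e^2*((1-q)/(1+q))^2 - (16*(2/Real.log 2)/(1-q)^2 + 12)*e^4
      ≤ ∑ y : Fin (n+1) → Bool, SD q e n y * binEnt (1/2 - e * wg q e n y)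
    ∧ ∑ y : Fin (n+1) → Bool, SD q e n y * binEnt (1/2 - e * wg q e n y)
      ≤ 1 - (2/Real.log 2)*e^2*((1-q)/(1+q))^2 := by
  have hKpos : 0 < (2/Real.log 2) := by positivity
  have h1q : (0:ℝ) < 1-q := by linarith
  have hSpos : ∀ y : Fin (n+1) → Bool, 0 < SD q e n y := SD_pos hq0 hq1 he0 he n
  have hwa : ∀ y : Fin (n+1) → Bool, |wg q e n y| ≤ 1 := wg_abs hq0 hq1 he0 he n
  have hew : ∀ y : Fin (n+1) → Bool, |e * wg q e n y| ≤ 1/20 := by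
    intro y
    rw [abs_mul, abs_of_pos he0]
    nlinarith [hwa y, abs_nonneg (wg q e n y)]
  -- second moment identity
  have hexp : ∑ y : Fin (n+1) → Bool, SD q e n y * (wg q e n y - ((1-q)/(1+q)))^2
      = (∑ y : Fin (n+1) → Bool, SD q e n y * (wg q e n y)^2) - ((1-q)/(1+q))^2 := by
    have hid : ∀ y : Fin (n+1) → Bool, SD q e n y * (wg q e n y - ((1-q)/(1+q)))^2
        = SD q e n y * (wg q e n y)^2 - 2*((1-q)/(1+q))*(SD q e n y * wg q e n y) + ((1-q)/(1+q))^2 * SD q e n y := by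
      intro y; ring
    rw [Finset.sum_congr rfl (fun y _ => hid y)]
    rw [Finset.sum_add_distrib, Finset.sum_sub_distrib, ← Finset.mul_sum, ← Finset.mul_sum,
      sumSw hq0 hq1 he0 he n, SD_sum1 hq0 hq1 he0 he n]
    ring
  have hvar0 : 0 ≤ ∑ y : Fin (n+1) → Bool, SD q e n y * (wg q e n y - ((1-q)/(1+q)))^2 :=
    Finset.sum_nonneg (fun y _ => mul_nonneg (hSpos y).le (sq_nonneg _))
  have hvarU : ∑ y : Fin (n+1) → Bool, SD q e n y * (wg q e n y - ((1-q)/(1+q)))^2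
      ≤ 16*e^2/(1-q)^2 := by
    calc ∑ y : Fin (n+1) → Bool, SD q e n y * (wg q e n y - ((1-q)/(1+q)))^2
        ≤ ∑ y : Fin (n+1) → Bool, SD q e n y * (16*e^2/(1-q)^2) := by
          apply Finset.sum_le_sum
          intro y _
          apply mul_le_mul_of_nonneg_left _ (hSpos y).le
          have hb := wg_m hq0 hq1 he0 he n y
          have h2 : (wg q e n y - ((1-q)/(1+q)))^2 ≤ (4*e/(1-q))^2 := by
            rw [← sq_abs]
            apply pow_le_pow_left₀ (abs_nonneg _) hb
          calc (wg q e n y - ((1-q)/(1+q)))^2 ≤ (4*e/(1-q))^2 := h2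
            _ = 16*e^2/(1-q)^2 := by rw [div_pow]; ring_nf
      _ = 16*e^2/(1-q)^2 := by rw [← Finset.sum_mul, SD_sum1 hq0 hq1 he0 he n, one_mul]
  have hm2 : ((1-q)/(1+q))^2 ≤ ∑ y : Fin (n+1) → Bool, SD q e n y * (wg q e n y)^2 := by linarith
  have hm2' : ∑ y : Fin (n+1) → Bool, SD q e n y * (wg q e n y)^2
      ≤ ((1-q)/(1+q))^2 + 16*e^2/(1-q)^2 := by linarith
  have hw4 : ∑ y : Fin (n+1) → Bool, SD q e n y * (wg q e n y)^4 ≤ 1 := by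
    calc ∑ y : Fin (n+1) → Bool, SD q e n y * (wg q e n y)^4
        ≤ ∑ y : Fin (n+1) → Bool, SD q e n y * 1 := by
          apply Finset.sum_le_sum
          intro y _
          apply mul_le_mul_of_nonneg_left _ (hSpos y).le
          have h2 : (wg q e n y)^2 ≤ 1 := by
            nlinarith [sq_abs (wg q e n y), hwa y, abs_nonneg (wg q e n y)]
          nlinarith [h2, sq_nonneg (wg q e n y)]
      _ = 1 := by simp [SD_sum1 hq0 hq1 he0 he n]
  have hw40 : 0 ≤ ∑ y : Fin (n+1) → Bool, SD q e n y * (wg q e n y)^4 :=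
    Finset.sum_nonneg (fun y _ => mul_nonneg (hSpos y).le (by positivity))
  constructor
  · -- lower bound
    have hstep : ∀ y : Fin (n+1) → Bool,
        SD q e n y * (1 - (2/Real.log 2)*(e^2*(wg q e n y)^2) - 12*(e^4*(wg q e n y)^4))
          ≤ SD q e n y * binEnt (1/2 - e * wg q e n y) := by
      intro y
      apply mul_le_mul_of_nonneg_left _ (hSpos y).le
      have hb := binEnt_ge (hew y)
      calc 1 - (2/Real.log 2)*(e^2*(wg q e n y)^2) - 12*(e^4*(wg q e n y)^4)
          = 1 - (2/Real.log 2)*(e*wg q e n y)^2 - 12*(e*wg q e n y)^4 := by ring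
        _ ≤ binEnt (1/2 - e * wg q e n y) := hb
    have hsum := Finset.sum_le_sum (s := (Finset.univ : Finset (Fin (n+1) → Bool))) (fun y _ => hstep y)
    have hrw : ∑ y : Fin (n+1) → Bool,
        SD q e n y * (1 - (2/Real.log 2)*(e^2*(wg q e n y)^2) - 12*(e^4*(wg q e n y)^4))
        = 1 - (2/Real.log 2)*e^2*(∑ y : Fin (n+1) → Bool, SD q e n y * (wg q e n y)^2)
          - 12*e^4*(∑ y : Fin (n+1) → Bool, SD q e n y * (wg q e n y)^4) := by
      have hterm : ∀ y ∈ (Finset.univ : Finset (Fin (n+1) → Bool)),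
          SD q e n y * (1 - (2/Real.log 2)*(e^2*(wg q e n y)^2) - 12*(e^4*(wg q e n y)^4))
            = SD q e n y - (2/Real.log 2)*e^2*(SD q e n y * (wg q e n y)^2)
              - 12*e^4*(SD q e n y * (wg q e n y)^4) := by
        intro y _; ring
      rw [Finset.sum_congr rfl hterm, Finset.sum_sub_distrib, Finset.sum_sub_distrib,
        ← Finset.mul_sum, ← Finset.mul_sum, SD_sum1 hq0 hq1 he0 he n]
    rw [hrw] at hsum
    have hKe2 : 0 ≤ (2/Real.log 2)*e^2 := by positivity
    have h1 : (2/Real.log 2)*e^2*(∑ y : Fin (n+1) → Bool, SD q e n y * (wg q e n y)^2)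
        ≤ (2/Real.log 2)*e^2*(((1-q)/(1+q))^2 + 16*e^2/(1-q)^2) := mul_le_mul_of_nonneg_left hm2' hKe2
    have h2 : 12*e^4*(∑ y : Fin (n+1) → Bool, SD q e n y * (wg q e n y)^4) ≤ 12*e^4 := by
      nlinarith [hw4, pow_nonneg he0.le 4, hw40]
    have hfin : (2/Real.log 2)*e^2*(16*e^2/(1-q)^2) = (16*(2/Real.log 2)/(1-q)^2)*e^4 := by
      field_simp
    nlinarith [hsum, h1, h2, hfin]
  · -- upper bound
    have hstep : ∀ y : Fin (n+1) → Bool,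
        SD q e n y * binEnt (1/2 - e * wg q e n y)
          ≤ SD q e n y * (1 - (2/Real.log 2)*(e^2*(wg q e n y)^2)) := by
      intro y
      apply mul_le_mul_of_nonneg_left _ (hSpos y).le
      have hb := binEnt_le (hew y)
      calc binEnt (1/2 - e * wg q e n y)
          ≤ 1 - (2/Real.log 2)*(e*wg q e n y)^2 := hb
        _ = 1 - (2/Real.log 2)*(e^2*(wg q e n y)^2) := by ring
    have hsum := Finset.sum_le_sum (s := (Finset.univ : Finset (Fin (n+1) → Bool))) (fun y _ => hstep y)
    have hrw : ∑ y : Fin (n+1) → Bool, SD q e n y * (1 - (2/Real.log 2)*(e^2*(wg q e n y)^2))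
        = 1 - (2/Real.log 2)*e^2*(∑ y : Fin (n+1) → Bool, SD q e n y * (wg q e n y)^2) := by
      have hterm : ∀ y ∈ (Finset.univ : Finset (Fin (n+1) → Bool)),
          SD q e n y * (1 - (2/Real.log 2)*(e^2*(wg q e n y)^2))
            = SD q e n y - (2/Real.log 2)*e^2*(SD q e n y * (wg q e n y)^2) := by
        intro y _; ring
      rw [Finset.sum_congr rfl hterm, Finset.sum_sub_distrib,
        ← Finset.mul_sum, SD_sum1 hq0 hq1 he0 he n]
    rw [hrw] at hsum
    have hKe2 : 0 ≤ (2/Real.log 2)*e^2 := by positivity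
    nlinarith [mul_le_mul_of_nonneg_left hm2 hKe2]

end ENT2


set_option maxHeartbeats 1000000 in
/-- Very noisy asymptotics for the `(1,∞)`-RLL hidden Markov process:
for fixed `q ∈ [0,1)` and `α = 1/2 - ε`,
`H̄(Y_ε) = 1 - 2·log₂e·((1-q)/(1+q))²·ε² + O(ε⁴)` (entropy rate taken as `liminf`). -/
theorem rll_very_noisy_asymptotics (q : ℝ) (hq : q ∈ Set.Ico (0:ℝ) 1) :
    ∃ C > (0:ℝ), ∃ e₀ > (0:ℝ), ∀ e : ℝ, 0 < e → e < e₀ → e < 1/2 →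
      |(Filter.atTop.liminf (fun n : ℕ =>
          entropyDist (bscOutput (1/2 - e) (markovPathProb (1/(1+q)) (q/(1+q)) q 1 n)) / n))
        - 1 + 2 * Real.logb 2 (Real.exp 1) * ((1-q)/(1+q))^2 * e^2| ≤ C * e^4 := by
  obtain ⟨hq0, hq1⟩ := hq
  have h1q : (0:ℝ) < 1 - q := by linarith
  have h1q' : (0:ℝ) < 1 + q := by linarith
  refine ⟨59/(1-q)^2, by positivity, 1/100, by norm_num, ?_⟩
  intro e he0 helt _
  have he : e ≤ 1/100 := le_of_lt helt
  have hm10 : (0:ℝ) ≤ (1-q)/(1+q) := by positivity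
  have hm11 : (1-q)/(1+q) ≤ 1 := by rw [div_le_one h1q']; linarith
  have hem : |e * ((1-q)/(1+q))| ≤ 1/20 := by
    rw [abs_of_nonneg (by positivity)]
    nlinarith
  have hm4 : ((1-q)/(1+q))^4 ≤ 1 := pow_le_one₀ hm10 hm11
  have hB0 : (0:ℝ) ≤ 16*(2/Real.log 2)/(1-q)^2 := by positivity
  have hE : ∀ n : ℕ,
      ((n:ℝ)+1) * (1 - (2/Real.log 2)*e^2*((1-q)/(1+q))^2
          - (16*(2/Real.log 2)/(1-q)^2 + 12)*e^4)
        ≤ entropyDist (SD q e n)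
      ∧ entropyDist (SD q e n) ≤ ((n:ℝ)+1) * (1 - (2/Real.log 2)*e^2*((1-q)/(1+q))^2) := by
    intro n
    induction n with
    | zero =>
      rw [ent_base hq0 hq1 he0 he]
      have hbl := binEnt_ge hem
      have hbu := binEnt_le hem
      have he4 : (0:ℝ) ≤ e^4 := by positivity
      constructor
      · push_cast
        nlinarith [mul_le_mul_of_nonneg_left hm4 he4]
      · push_cast
        nlinarith
    | succ n IH =>
      rw [ent_step hq0 hq1 he0 he n]
      have hd := delta_bounds hq0 hq1 he0 he n
      constructor
      · push_cast
        push_cast at IH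
        linarith [IH.1, hd.1]
      · push_cast
        push_cast at IH
        linarith [IH.2, hd.2]
  have hEnt : ∀ n : ℕ,
      entropyDist (bscOutput (1/2 - e) (markovPathProb (1/(1+q)) (q/(1+q)) q 1 (n+1)))
        = entropyDist (SD q e n) := by
    intro n
    unfold entropyDist
    exact Finset.sum_congr rfl (fun y _ => by rw [Pn_eq]; rfl)
  set a : ℕ → ℝ := fun n : ℕ =>
      entropyDist (bscOutput (1/2 - e) (markovPathProb (1/(1+q)) (q/(1+q)) q 1 n)) / n with ha
  have haL : ∀ᶠ n in Filter.atTop,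
      (1 - (2/Real.log 2)*e^2*((1-q)/(1+q))^2 - (16*(2/Real.log 2)/(1-q)^2 + 12)*e^4)
        ≤ a n := by
    rw [Filter.eventually_atTop]
    refine ⟨1, fun n hn => ?_⟩
    obtain ⟨k, rfl⟩ : ∃ k, n = k + 1 := ⟨n - 1, by omega⟩
    show _ ≤ entropyDist (bscOutput (1/2 - e)
        (markovPathProb (1/(1+q)) (q/(1+q)) q 1 (k+1))) / ((k+1 : ℕ) : ℝ)
    rw [hEnt k, le_div_iff₀ (by push_cast; positivity)]
    have h := (hE k).1
    push_cast
    linarith [h]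
  have haU : ∀ᶠ n in Filter.atTop,
      a n ≤ (1 - (2/Real.log 2)*e^2*((1-q)/(1+q))^2) := by
    rw [Filter.eventually_atTop]
    refine ⟨1, fun n hn => ?_⟩
    obtain ⟨k, rfl⟩ : ∃ k, n = k + 1 := ⟨n - 1, by omega⟩
    show entropyDist (bscOutput (1/2 - e)
        (markovPathProb (1/(1+q)) (q/(1+q)) q 1 (k+1))) / ((k+1 : ℕ) : ℝ) ≤ _
    rw [hEnt k, div_le_iff₀ (by push_cast; positivity)]
    have h := (hE k).2
    push_cast
    linarith [h]
  have hbL : Filter.IsBoundedUnder (· ≥ ·) Filter.atTop a := ⟨_, Filter.eventually_map.mpr (haL.mono (fun n h => h))⟩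
  have hbU : Filter.IsBoundedUnder (· ≤ ·) Filter.atTop a := ⟨_, Filter.eventually_map.mpr (haU.mono (fun n h => h))⟩
  have hliL := Filter.le_liminf_of_le (Filter.IsBoundedUnder.isCoboundedUnder_ge hbU) haL
  have hliU := Filter.liminf_le_of_frequently_le haU.frequently hbL
  have hlogb : 2 * Real.logb 2 (Real.exp 1) = 2/Real.log 2 := by
    rw [Real.logb, Real.log_exp]
    ring
  have hK : 2/Real.log 2 ≤ 2.89 := by
    rw [div_le_iff₀ log2pos]
    nlinarith [Real.log_two_gt_d9]
  have hCb : (16*(2/Real.log 2)/(1-q)^2 + 12)*e^4 ≤ 59/(1-q)^2*e^4 := by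
    have he4 : (0:ℝ) ≤ e^4 := by positivity
    have hq2 : (1-q)^2 ≤ 1 := by nlinarith
    have h3 : 16*(2/Real.log 2)/(1-q)^2 + 12 ≤ 59/(1-q)^2 := by
      rw [div_add' _ _ _ (by positivity : ((1:ℝ)-q)^2 ≠ 0)]
      gcongr
      nlinarith [hK, log2pos]
    exact mul_le_mul_of_nonneg_right h3 he4
  rw [hlogb, abs_le]
  have hCe4 : (0:ℝ) ≤ 59/(1-q)^2*e^4 := by positivity
  constructor
  · linarith [hliL, hCb]
  · linarith [hliU, hCe4]
end

section
/- Let q ∈ (0,1/2) and α ∈ (0,1/2). The entropy rate of the hidden Markov process {Y_n} obtained by passing the stationary symmetric binary Markov process with transition probability q through a binary symmetric channel with crossover probability α satisfies H̄(Y) ≥ h(α*q) = h(α(1-q) + q(1-α)). -/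
open Real Filter MeasureTheory

noncomputable def tfac (q : ℝ) (n : ℕ) (x : Fin n → Bool) (b : Bool) : ℝ :=
  if h : n = 0 then 1/2 else if x ⟨n-1, by omega⟩ = b then 1 - q else q

lemma snoc_lt {α : Type*} {n : ℕ} (x : Fin n → α) (b : α) (j : Fin (n+1)) (h : (j:ℕ) < n) :
    (Fin.snoc x b : Fin (n+1) → α) j = x ⟨j, h⟩ := by
  induction j using Fin.lastCases with
  | last => simp at h
  | cast i => rw [Fin.snoc_castSucc]; congr 1

lemma symPathProb_snoc (q : ℝ) (n : ℕ) (x : Fin n → Bool) (b : Bool) :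
    symPathProb q (n+1) (Fin.snoc x b) = symPathProb q n x * tfac q n x b := by
  unfold symPathProb
  rw [Fin.prod_univ_castSucc]
  congr 1
  · refine Finset.prod_congr rfl fun i _ => ?_
    simp only [Fin.coe_castSucc]
    rcases Nat.eq_zero_or_pos i.val with h0 | hpos
    · simp [h0]
    · have hc : ¬ ((i:ℕ) = 0) := by omega
      rw [if_neg hc, if_neg hc]
      congr 1
      · congr 1
        · exact snoc_lt x b _ (show (i:ℕ)-1 < n by omega)
        · exact snoc_lt x b _ (show (i:ℕ) < n from i.isLt)
  · simp only [Fin.val_last, tfac]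
    rcases Nat.eq_zero_or_pos n with h0 | hpos
    · subst h0; simp
    · rw [if_neg (by omega : ¬ (n = 0)), dif_neg (by omega : ¬ (n = 0))]
      congr 1
      congr 1
      · exact snoc_lt x b _ (show n-1 < n by omega)
      · simp

def boolSnocEquiv (n : ℕ) : ((Fin n → Bool) × Bool) ≃ (Fin (n+1) → Bool) where
  toFun p := Fin.snoc p.1 p.2
  invFun f := (Fin.init f, f (Fin.last n))
  left_inv := by rintro ⟨x, b⟩; simp
  right_inv f := Fin.snoc_init_self f

lemma chanProd_snoc (a : ℝ) (n : ℕ) (y x : Fin n → Bool) (c b : Bool) :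
    (∏ i : Fin (n+1),
      (if (Fin.snoc y c : Fin (n+1) → Bool) i = (Fin.snoc x b : Fin (n+1) → Bool) i
        then 1-a else a))
      = (∏ i : Fin n, (if y i = x i then 1-a else a)) * (if c = b then 1-a else a) := by
  rw [Fin.prod_univ_castSucc]
  simp [Fin.snoc_castSucc, Fin.snoc_last]

/-- channel factor combined with transition -/
noncomputable def gfun (a q : ℝ) (n : ℕ) (x : Fin n → Bool) (c : Bool) : ℝ :=
  ∑ b : Bool, tfac q n x b * (if c = b then 1 - a else a)

lemma bscOutput_snoc (a q : ℝ) (n : ℕ) (y : Fin n → Bool) (c : Bool) :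
    bscOutput a (symPathProb q (n+1)) (Fin.snoc y c)
      = ∑ x : Fin n → Bool,
          (symPathProb q n x * ∏ i, (if y i = x i then 1-a else a)) * gfun a q n x c := by
  unfold bscOutput
  rw [← Equiv.sum_comp (boolSnocEquiv n)
      (fun x' => symPathProb q (n+1) x' * ∏ i, (if (Fin.snoc y c : Fin (n+1) → Bool) i = x' i then 1-a else a))]
  rw [Fintype.sum_prod_type]
  refine Finset.sum_congr rfl fun x _ => ?_
  rw [gfun, Finset.mul_sum]
  refine Finset.sum_congr rfl fun b _ => ?_
  show symPathProb q (n+1) (Fin.snoc x b) * _ = _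
  rw [symPathProb_snoc, show (boolSnocEquiv n) (x, b) = Fin.snoc x b from rfl, chanProd_snoc]
  ring

section gfacts

lemma tfac_nonneg {q : ℝ} (hq : q ∈ Set.Ioo (0:ℝ) (1/2)) (n : ℕ) (x : Fin n → Bool) (b : Bool) :
    0 ≤ tfac q n x b := by
  obtain ⟨h1, h2⟩ := hq
  unfold tfac
  split
  · norm_num
  · split <;> nlinarith

lemma gfun_sum (a q : ℝ) (n : ℕ) (x : Fin n → Bool) :
    gfun a q n x false + gfun a q n x true = 1 := by
  unfold gfun tfac
  rcases Nat.eq_zero_or_pos n with h0 | hpos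
  · subst h0; simp [Fintype.sum_bool]; ring
  · simp only [dif_neg (show ¬ n = 0 by omega), Fintype.sum_bool]
    rcases Bool.eq_false_or_eq_true (x ⟨n-1, by omega⟩) with hx | hx <;> rw [hx] <;> simp <;> ring

lemma gfun_ge {a q : ℝ} (ha : a ∈ Set.Ioo (0:ℝ) (1/2)) (hq : q ∈ Set.Ioo (0:ℝ) (1/2))
    (n : ℕ) (x : Fin n → Bool) (c : Bool) : bConv a q ≤ gfun a q n x c := by
  obtain ⟨ha1, ha2⟩ := ha
  obtain ⟨hq1, hq2⟩ := hq
  unfold gfun tfac bConv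
  rcases Nat.eq_zero_or_pos n with h0 | hpos
  · subst h0
    simp only [dif_pos rfl, Fintype.sum_bool]
    cases c <;> simp <;> nlinarith
  · simp only [dif_neg (show ¬ n = 0 by omega), Fintype.sum_bool]
    rcases Bool.eq_false_or_eq_true (x ⟨n-1, by omega⟩) with hx | hx <;>
      rw [hx] <;> cases c <;> simp <;> nlinarith

end gfacts

lemma symPathProb_nonneg {q : ℝ} (hq : q ∈ Set.Ioo (0:ℝ) (1/2)) (n : ℕ) (x : Fin n → Bool) :
    0 ≤ symPathProb q n x := by
  obtain ⟨h1, h2⟩ := hq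
  unfold symPathProb
  apply Finset.prod_nonneg
  intro i _
  split
  · norm_num
  · split <;> nlinarith

lemma sum_symPathProb {q : ℝ} (n : ℕ) :
    ∑ x : Fin n → Bool, symPathProb q n x = 1 := by
  induction n with
  | zero =>
    rw [Finset.univ_unique, Finset.sum_singleton]
    simp [symPathProb]
  | succ n ih =>
    rw [← Equiv.sum_comp (boolSnocEquiv n) (fun x' => symPathProb q (n+1) x'),
        Fintype.sum_prod_type]
    calc ∑ x : Fin n → Bool, ∑ b : Bool, symPathProb q (n+1) ((boolSnocEquiv n) (x, b))
        = ∑ x : Fin n → Bool, symPathProb q n x * (tfac q n x false + tfac q n x true) := by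
          refine Finset.sum_congr rfl fun x _ => ?_
          rw [Fintype.sum_bool,
            show (boolSnocEquiv n) (x, true) = Fin.snoc x true from rfl,
            show (boolSnocEquiv n) (x, false) = Fin.snoc x false from rfl,
            symPathProb_snoc, symPathProb_snoc]
          ring
      _ = ∑ x : Fin n → Bool, symPathProb q n x := by
          refine Finset.sum_congr rfl fun x _ => ?_
          unfold tfac
          rcases Nat.eq_zero_or_pos n with h0 | hpos
          · subst h0; norm_num
          · simp only [dif_neg (show ¬ n = 0 by omega)]
            rcases Bool.eq_false_or_eq_true (x ⟨n-1, by omega⟩) with hx | hx <;>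
              rw [hx] <;> simp <;> ring
      _ = 1 := ih

lemma chanProd_snoc' (a : ℝ) (n : ℕ) (y : Fin n → Bool) (x' : Fin (n+1) → Bool) (c : Bool) :
    (∏ i : Fin (n+1), (if (Fin.snoc y c : Fin (n+1) → Bool) i = x' i then 1-a else a))
      = (∏ i : Fin n, (if y i = x' i.castSucc then 1-a else a))
          * (if c = x' (Fin.last n) then 1-a else a) := by
  rw [Fin.prod_univ_castSucc]
  simp [Fin.snoc_castSucc, Fin.snoc_last]

lemma sum_chanProd (a : ℝ) (n : ℕ) (x : Fin n → Bool) :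
    ∑ y : Fin n → Bool, ∏ i, (if y i = x i then 1-a else a) = 1 := by
  induction n with
  | zero =>
    rw [Finset.univ_unique, Finset.sum_singleton]
    simp
  | succ n ih =>
    rw [← Equiv.sum_comp (boolSnocEquiv n)
        (fun y' => ∏ i, (if y' i = x i then 1-a else a)), Fintype.sum_prod_type]
    calc ∑ y : Fin n → Bool, ∑ c : Bool, ∏ i, (if (boolSnocEquiv n) (y, c) i = x i then 1-a else a)
        = ∑ y : Fin n → Bool, (∏ i : Fin n, (if y i = x i.castSucc then 1-a else a)) := by
          refine Finset.sum_congr rfl fun y _ => ?_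
          rw [Fintype.sum_bool,
            show (boolSnocEquiv n) (y, true) = Fin.snoc y true from rfl,
            show (boolSnocEquiv n) (y, false) = Fin.snoc y false from rfl,
            chanProd_snoc' a n y x true, chanProd_snoc' a n y x false]
          rcases Bool.eq_false_or_eq_true (x (Fin.last n)) with hx | hx <;> rw [hx] <;> simp <;> ring
      _ = 1 := ih _

lemma bscOutput_nonneg {a q : ℝ} (ha : a ∈ Set.Ioo (0:ℝ) (1/2)) (hq : q ∈ Set.Ioo (0:ℝ) (1/2))
    (n : ℕ) (y : Fin n → Bool) : 0 ≤ bscOutput a (symPathProb q n) y := by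
  apply Finset.sum_nonneg
  intro x _
  apply mul_nonneg (symPathProb_nonneg hq n x)
  apply Finset.prod_nonneg
  intro i _
  obtain ⟨h1, h2⟩ := ha
  split <;> nlinarith

lemma sum_bscOutput {a q : ℝ} (n : ℕ) :
    ∑ y : Fin n → Bool, bscOutput a (symPathProb q n) y = 1 := by
  unfold bscOutput
  rw [Finset.sum_comm]
  calc ∑ x : Fin n → Bool, ∑ y : Fin n → Bool, symPathProb q n x * ∏ i, (if y i = x i then 1-a else a)
      = ∑ x : Fin n → Bool, symPathProb q n x := by
        refine Finset.sum_congr rfl fun x _ => ?_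
        rw [← Finset.mul_sum, sum_chanProd, mul_one]
    _ = 1 := sum_symPathProb n

lemma binEnt_eq_s9 (p : ℝ) : binEnt p = Real.binEntropy p / Real.log 2 := by
  unfold binEnt Real.binEntropy Real.logb
  rw [Real.log_inv, Real.log_inv]
  ring

lemma binEnt_mono {s r : ℝ} (hs0 : 0 < s) (hs : s ≤ 1/2) (h1 : s ≤ r) (h2 : r ≤ 1 - s) :
    binEnt s ≤ binEnt r := by
  rw [binEnt_eq_s9, binEnt_eq_s9]
  have hlog : (0:ℝ) < Real.log 2 := Real.log_pos (by norm_num)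
  have key : Real.binEntropy s ≤ Real.binEntropy r := by
    rcases le_or_gt r 2⁻¹ with hrle | hrgt
    · exact Real.binEntropy_strictMonoOn.monotoneOn ⟨hs0.le, by linarith⟩
        ⟨by linarith, hrle⟩ h1
    · rw [← Real.binEntropy_one_sub r]
      exact Real.binEntropy_strictMonoOn.monotoneOn ⟨hs0.le, by linarith⟩
        ⟨by linarith, by linarith⟩ (by linarith)
  exact (div_le_div_iff_of_pos_right hlog).mpr key

lemma ent_pair {s Jf Jt : ℝ} (hs0 : 0 < s) (hs : s ≤ 1/2)
    (hJf : 0 ≤ Jf) (hJt : 0 ≤ Jt)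
    (hf : s * (Jf + Jt) ≤ Jf) (ht : s * (Jf + Jt) ≤ Jt) :
    -((Jf + Jt) * Real.logb 2 (Jf + Jt)) + (Jf + Jt) * binEnt s
      ≤ -(Jf * Real.logb 2 Jf) + -(Jt * Real.logb 2 Jt) := by
  set M := Jf + Jt with hM
  rcases eq_or_lt_of_le (show (0:ℝ) ≤ M by positivity) with h0 | hMpos
  · have hf0 : Jf = 0 := by linarith [hJt]
    have ht0 : Jt = 0 := by linarith [hJf]
    simp [hf0, ht0, ← h0]
  · set r := Jt / M with hr
    have hr1 : s ≤ r := (le_div_iff₀ hMpos).mpr (by linarith [ht])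
    have hr2 : r ≤ 1 - s := by
      rw [div_le_iff₀ hMpos]
      nlinarith [hf]
    have hr0 : 0 < r := lt_of_lt_of_le hs0 hr1
    have hr0' : 0 < 1 - r := by nlinarith
    have hJt' : Jt = M * r := by rw [hr, mul_div_assoc', eq_div_iff hMpos.ne']; ring
    have hJf' : Jf = M * (1 - r) := by rw [hr]; field_simp; rw [hM]; ring
    rw [hJt', hJf',
      Real.logb_mul hMpos.ne' (by positivity),
      Real.logb_mul hMpos.ne' (by positivity)]
    have expand : -(M * (1-r) * (Real.logb 2 M + Real.logb 2 (1-r)))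
        + -(M * r * (Real.logb 2 M + Real.logb 2 r))
        = -(M * Real.logb 2 M) + M * binEnt r := by
      unfold binEnt; ring
    rw [expand]
    have key : binEnt s ≤ binEnt r := binEnt_mono hs0 hs hr1 hr2
    nlinarith [mul_le_mul_of_nonneg_left key hMpos.le]

lemma step_ent {a q : ℝ} (ha : a ∈ Set.Ioo (0:ℝ) (1/2)) (hq : q ∈ Set.Ioo (0:ℝ) (1/2)) (n : ℕ) :
    entropyDist (bscOutput a (symPathProb q n)) + binEnt (bConv a q)
      ≤ entropyDist (bscOutput a (symPathProb q (n+1))) := by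
  obtain ⟨ha1, ha2⟩ := ha
  obtain ⟨hq1, hq2⟩ := hq
  have hs0 : 0 < bConv a q := by unfold bConv; nlinarith
  have hs2 : bConv a q ≤ 1/2 := by unfold bConv; nlinarith
  have ha' : a ∈ Set.Ioo (0:ℝ) (1/2) := ⟨ha1, ha2⟩
  have hq' : q ∈ Set.Ioo (0:ℝ) (1/2) := ⟨hq1, hq2⟩
  set s := bConv a q with hsdef
  have hJ0 : ∀ (y : Fin n → Bool) (c : Bool),
      0 ≤ bscOutput a (symPathProb q (n+1)) (Fin.snoc y c) :=
    fun y c => bscOutput_nonneg ha' hq' (n+1) _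
  have hsum_c : ∀ y : Fin n → Bool,
      bscOutput a (symPathProb q (n+1)) (Fin.snoc y false)
        + bscOutput a (symPathProb q (n+1)) (Fin.snoc y true)
      = bscOutput a (symPathProb q n) y := by
    intro y
    rw [bscOutput_snoc, bscOutput_snoc, ← Finset.sum_add_distrib]
    show _ = bscOutput a (symPathProb q n) y
    unfold bscOutput
    refine Finset.sum_congr rfl fun x _ => ?_
    rw [← mul_add, gfun_sum a q n x]
    ring
  have hge : ∀ (y : Fin n → Bool) (c : Bool),
      s * bscOutput a (symPathProb q n) y ≤ bscOutput a (symPathProb q (n+1)) (Fin.snoc y c) := by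
    intro y c
    rw [bscOutput_snoc]
    unfold bscOutput
    rw [Finset.mul_sum]
    refine Finset.sum_le_sum fun x _ => ?_
    have hw : 0 ≤ symPathProb q n x * ∏ i, (if y i = x i then 1-a else a) := by
      apply mul_nonneg (symPathProb_nonneg hq' n x)
      apply Finset.prod_nonneg; intro i _; split <;> nlinarith
    calc s * (symPathProb q n x * ∏ i, (if y i = x i then 1-a else a))
        = (symPathProb q n x * ∏ i, (if y i = x i then 1-a else a)) * s := mul_comm _ _
      _ ≤ _ * gfun a q n x c := mul_le_mul_of_nonneg_left (gfun_ge ha' hq' n x c) hw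
  have main : entropyDist (bscOutput a (symPathProb q n))
      + binEnt s * ∑ y, bscOutput a (symPathProb q n) y
      ≤ entropyDist (bscOutput a (symPathProb q (n+1))) := by
    unfold entropyDist
    rw [← Equiv.sum_comp (boolSnocEquiv n)
      (fun y' => -(bscOutput a (symPathProb q (n+1)) y'
          * Real.logb 2 (bscOutput a (symPathProb q (n+1)) y'))), Fintype.sum_prod_type]
    rw [Finset.mul_sum, ← Finset.sum_add_distrib]
    refine Finset.sum_le_sum fun y _ => ?_
    rw [Fintype.sum_bool]
    have hf := hge y false; rw [← hsum_c y] at hf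
    have ht := hge y true; rw [← hsum_c y] at ht
    have key := ent_pair hs0 hs2 (hJ0 y false) (hJ0 y true) hf ht
    show -(bscOutput a (symPathProb q n) y * Real.logb 2 (bscOutput a (symPathProb q n) y))
        + binEnt s * bscOutput a (symPathProb q n) y
      ≤ -(bscOutput a (symPathProb q (n+1)) (Fin.snoc y true)
            * Real.logb 2 (bscOutput a (symPathProb q (n+1)) (Fin.snoc y true)))
        + -(bscOutput a (symPathProb q (n+1)) (Fin.snoc y false)
            * Real.logb 2 (bscOutput a (symPathProb q (n+1)) (Fin.snoc y false)))
    rw [← hsum_c y]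
    linarith [key]
  calc entropyDist (bscOutput a (symPathProb q n)) + binEnt s
      = entropyDist (bscOutput a (symPathProb q n))
          + binEnt s * ∑ y, bscOutput a (symPathProb q n) y := by
        rw [sum_bscOutput n, mul_one]
    _ ≤ _ := main

lemma entropyDist_le_card {β : Type*} [Fintype β] (p : β → ℝ) (hp : ∀ b, 0 ≤ p b)
    (hsum : ∑ b, p b = 1) : entropyDist p ≤ Real.logb 2 (Fintype.card β) := by
  have hne : Nonempty β := by
    rcases isEmpty_or_nonempty β with h | h
    · simp [Finset.univ_eq_empty] at hsum
    · exact h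
  have hN : 0 < ((Fintype.card β : ℕ) : ℝ) := by
    have := Fintype.card_pos (α := β)
    exact_mod_cast this
  set N : ℝ := ((Fintype.card β : ℕ) : ℝ) with hNdef
  have key : ∑ b, Real.negMulLog (p b) ≤ Real.log N := by
    have hterm : ∀ b, Real.negMulLog (p b) ≤ 1/N - p b + p b * Real.log N := by
      intro b
      rcases eq_or_lt_of_le (hp b) with h0 | hpos
      · rw [← h0]; simp [Real.negMulLog]; positivity
      · have hlog := Real.log_le_sub_one_of_pos (show 0 < 1/((p b) * N) by positivity)
        rw [Real.log_div one_ne_zero (by positivity), Real.log_one,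
          Real.log_mul hpos.ne' hN.ne'] at hlog
        have hmul := mul_le_mul_of_nonneg_left hlog (hp b)
        have hcan : p b * (1/(p b * N)) = 1/N := by field_simp
        rw [Real.negMulLog]
        nlinarith [hmul, hcan]
    calc ∑ b, Real.negMulLog (p b) ≤ ∑ b, (1/N - p b + p b * Real.log N) :=
          Finset.sum_le_sum (fun b _ => hterm b)
      _ = (Fintype.card β : ℝ) * (1/N) - 1 + Real.log N := by
          rw [Finset.sum_add_distrib, Finset.sum_sub_distrib, Finset.sum_const,
            Finset.card_univ, ← Finset.sum_mul, hsum, one_mul, nsmul_eq_mul]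
      _ = Real.log N := by field_simp; rw [← hNdef]; ring
  have conv : entropyDist p = (∑ b, Real.negMulLog (p b)) / Real.log 2 := by
    unfold entropyDist
    rw [Finset.sum_div]
    refine Finset.sum_congr rfl fun b _ => ?_
    unfold Real.negMulLog Real.logb
    ring
  have hlog2 : (0:ℝ) < Real.log 2 := Real.log_pos (by norm_num)
  rw [conv, Real.logb]
  exact (div_le_div_iff_of_pos_right hlog2).mpr key

lemma ent_ge {a q : ℝ} (ha : a ∈ Set.Ioo (0:ℝ) (1/2)) (hq : q ∈ Set.Ioo (0:ℝ) (1/2)) (n : ℕ) :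
    (n:ℝ) * binEnt (bConv a q) ≤ entropyDist (bscOutput a (symPathProb q n)) := by
  induction n with
  | zero =>
    have h0 : ∀ y, bscOutput a (symPathProb q 0) y = 1 := by
      intro y
      unfold bscOutput symPathProb
      simp
    have h1 : entropyDist (bscOutput a (symPathProb q 0)) = 0 := by
      unfold entropyDist
      simp [h0]
    simp [h1]
  | succ n ih =>
    calc ((n+1:ℕ):ℝ) * binEnt (bConv a q) = (n:ℝ) * binEnt (bConv a q) + binEnt (bConv a q) := by
          push_cast; ring
      _ ≤ entropyDist (bscOutput a (symPathProb q n)) + binEnt (bConv a q) := by linarith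
      _ ≤ entropyDist (bscOutput a (symPathProb q (n+1))) := step_ent ha hq n


/-- Mrs. Gerber's Lemma bound. For `q, α ∈ (0,1/2)`, the entropy rate
(taken as `liminf`) of the symmetric binary hidden Markov process satisfies
`H̄(Y) ≥ h(α*q) = h(α(1-q) + q(1-α))`. -/
theorem mgl_entropy_rate_lower_bound (q a : ℝ)
    (hq : q ∈ Set.Ioo (0:ℝ) (1/2)) (ha : a ∈ Set.Ioo (0:ℝ) (1/2)) :
    binEnt (bConv a q) ≤
      Filter.atTop.liminf (fun n : ℕ => entropyDist (bscOutput a (symPathProb q n)) / n) := by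
  have hub : ∀ n : ℕ, entropyDist (bscOutput a (symPathProb q n)) ≤ n := by
    intro n
    have := entropyDist_le_card (bscOutput a (symPathProb q n))
      (fun y => bscOutput_nonneg ha hq n y) (sum_bscOutput n)
    refine this.trans ?_
    have hcard : (Fintype.card (Fin n → Bool) : ℝ) = (2:ℝ)^n := by
      rw [Fintype.card_fun]
      push_cast
      simp
    rw [hcard, Real.logb_pow, Real.logb_self_eq_one (by norm_num), mul_one]
  apply Filter.le_liminf_of_le
  · apply Filter.IsBoundedUnder.isCoboundedUnder_ge
    refine isBoundedUnder_of ⟨1, fun n => ?_⟩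
    rcases Nat.eq_zero_or_pos n with h0 | hpos
    · subst h0; simp
    · have hn : (0:ℝ) < n := by exact_mod_cast hpos
      rw [div_le_one hn]
      exact hub n
  · filter_upwards [Filter.eventually_ge_atTop 1] with n hn
    have hpos : (0:ℝ) < n := by exact_mod_cast hn
    rw [le_div_iff₀ hpos]
    calc binEnt (bConv a q) * n = (n:ℝ) * binEnt (bConv a q) := mul_comm _ _
      _ ≤ _ := ent_ge ha hq n
end
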